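/- Let r ≥ 0, t, k be integers with t ≥ r + 2 and k ≥ r, and set Ω = Ω(t,r), a = a(t,r), b = b(t,r). Then t·C(k+2−(r+1), 2) − b·C(k+2−Ω, 2) − a·C(k+2−(Ω+1), 2) = C(k+2, 2) − C(r+2, 2); in particular this expression does not depend on t for t ≥ r + 2. -/

import Mathlib

/-- `Ω t r = ⌊t·r/(t-1)⌋ + 1`, the floor taken in `ℚ`. -/
noncomputable def Omega (t r : ℤ) : ℤ := ⌊(t * r : ℚ) / ((t : ℚ) - 1)⌋ + 1

/-- `a t r = t·(r+1) + (1−t)·Ω(t,r)`. -/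
noncomputable def aa (t r : ℤ) : ℤ := t * (r + 1) + (1 - t) * Omega t r

/-- `b t r = t − 1 − a(t,r)`. -/
noncomputable def bb (t r : ℤ) : ℤ := t - 1 - aa t r

/-- `C2 m = C(m, 2)`, with the convention that it is `0` for `m < 2`
(truncation via `Int.toNat`). -/
def C2 (m : ℤ) : ℤ := ((m.toNat).choose 2 : ℤ)

lemma C2_eq (n : ℤ) (hn : 0 ≤ n) : 2 * C2 n = n * (n - 1) := by
  obtain ⟨m, rfl⟩ := Int.eq_ofNat_of_zero_le hn
  unfold C2
  rw [Int.toNat_natCast, Nat.choose_two_right]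
  have := Nat.even_mul_pred_self m
  obtain ⟨c, hc⟩ := this
  rw [hc]
  have h2 : (c + c) / 2 = c := by omega
  rw [h2]
  have : (m : ℤ) * ((m:ℤ) - 1) = ((m * (m-1) : ℕ) : ℤ) := by
    cases m with
    | zero => simp
    | succ k => push_cast [Nat.succ_sub_one]; ring
  rw [this, hc]
  push_cast
  ring

lemma Omega_eq (t r : ℤ) (hr : 0 ≤ r) (ht : t ≥ r + 2) : Omega t r = r + 1 := by
  unfold Omega
  have hrq : (0:ℚ) ≤ r := by exact_mod_cast hr
  have h1 : (1:ℚ) ≤ (t:ℚ) - 1 := by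
    have : (r:ℚ) + 2 ≤ t := by exact_mod_cast ht
    linarith
  have hpos : (0:ℚ) < (t:ℚ) - 1 := by linarith
  have hfl : ⌊(t * r : ℚ) / ((t : ℚ) - 1)⌋ = r := by
    rw [Int.floor_eq_iff]
    constructor
    · rw [le_div_iff₀ hpos]
      push_cast
      have : (0:ℚ) ≤ r := by exact_mod_cast hr
      nlinarith
    · rw [div_lt_iff₀ hpos]
      push_cast
      have h2 : (r:ℚ) + 2 ≤ t := by exact_mod_cast ht
      have : (0:ℚ) ≤ r := by exact_mod_cast hr
      nlinarith
  rw [hfl]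

theorem stmt_7 (r t k : ℤ) (hr : 0 ≤ r) (ht : t ≥ r + 2) (hk : k ≥ r) :
    t * C2 (k + 2 - (r + 1)) - bb t r * C2 (k + 2 - Omega t r)
      - aa t r * C2 (k + 2 - (Omega t r + 1))
    = C2 (k + 2) - C2 (r + 2) := by
  have hO : Omega t r = r + 1 := Omega_eq t r hr ht
  have ha : aa t r = r + 1 := by unfold aa; rw [hO]; ring
  have hb : bb t r = t - r - 2 := by unfold bb; rw [ha]; ring
  rw [hO, ha, hb]
  have h1 := C2_eq (k + 2 - (r + 1)) (by omega)
  have h2 := C2_eq (k + 2 - (r + 1 + 1)) (by omega)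
  have h3 := C2_eq (k + 2) (by omega)
  have h4 := C2_eq (r + 2) (by omega)
  nlinarith [h1, h2, h3, h4]
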